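/- arXiv:2507.08471 — 3 statements merged into one kernel-verified Lean document; each statement's English description precedes it below -/
import Mathlib

section
/- Let U ⊆ ℂ be a bounded open set and z ∈ U a point. Define Shape(U, z) = (sup over x ∈ ∂U of |x − z|) / (inf over x ∈ ∂U of |x − z|). Then Shape(U, z) = 1 if and only if U is an open Euclidean disk centered at z. -/
open Metric Set

/-- The shape of a set `U` about a point `z`:  the ratio of the sup and inf of
distances from `z` to the boundary of `U`. -/
noncomputable def Shape (U : Set ℂ) (z : ℂ) : ℝ :=
  sSup ((fun x => dist x z) '' frontier U) / sInf ((fun x => dist x z) '' frontier U)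

/-- A preconnected set avoiding the frontier of `U` cannot meet both `U` and `Uᶜ`. -/
lemma precon_no_frontier {t U : Set ℂ} (ht : IsPreconnected t)
    (hd : ∀ p ∈ t, p ∉ frontier U) {x y : ℂ} (hx : x ∈ t) (hxU : x ∈ U)
    (hy : y ∈ t) (hyU : y ∉ U) : False := by
  have cover : t ⊆ interior U ∪ (closure U)ᶜ := by
    intro p hp
    have hpf := hd p hp
    by_cases hpc : p ∈ closure U
    · left
      by_contra hpi
      exact hpf ⟨hpc, hpi⟩
    · right; exact hpc
  have h := ht (interior U) (closure U)ᶜ isOpen_interior isClosed_closure.isOpen_compl cover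
    ⟨x, hx, by
      rcases cover hx with h' | h'
      · exact h'
      · exact absurd (subset_closure hxU) h'⟩
    ⟨y, hy, by
      rcases cover hy with h' | h'
      · exact absurd (interior_subset h') hyU
      · exact h'⟩
  obtain ⟨p, -, hp1, hp2⟩ := h
  exact hp2 (subset_closure (interior_subset hp1))

theorem shape_eq_one_iff_ball (U : Set ℂ) (z : ℂ)
    (hUopen : IsOpen U) (hUbdd : Bornology.IsBounded U) (hUne : U.Nonempty)
    (hz : z ∈ U) :
    Shape U z = 1 ↔ ∃ r > 0, U = Metric.ball z r := by
  obtain ⟨R, hR⟩ := hUbdd.subset_closedBall z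
  constructor
  · intro hshape
    set S : Set ℝ := (fun x => dist x z) '' frontier U with hS
    -- frontier is nonempty
    have hR0 : 0 ≤ R := by
      obtain ⟨w, hw⟩ := hUne
      exact le_trans dist_nonneg (hR hw)
    have hUne_univ : U ≠ univ := by
      intro h
      have h2 : z + (↑(R + 1) : ℂ) ∈ closedBall z R := hR (h ▸ mem_univ _)
      simp only [mem_closedBall, dist_self_add_left, Complex.norm_real,
        Real.norm_eq_abs] at h2
      rw [abs_of_nonneg (by linarith : (0:ℝ) ≤ R + 1)] at h2
      linarith
    have hfne : (frontier U).Nonempty := nonempty_frontier_iff.mpr ⟨hUne, hUne_univ⟩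
    have hSne : S.Nonempty := hfne.image _
    -- frontier points are outside U
    have hfU : ∀ x ∈ frontier U, x ∉ U := by
      intro x hx hxU
      exact hx.2 (by rwa [hUopen.interior_eq])
    -- positive lower bound
    obtain ⟨ε, hε, hεball⟩ := Metric.isOpen_iff.mp hUopen z hz
    have hlow : ∀ a ∈ S, ε ≤ a := by
      rintro a ⟨x, hx, rfl⟩
      by_contra h
      exact hfU x hx (hεball (by simpa [mem_ball] using not_le.mp h))
    have hbdd : BddBelow S := ⟨ε, hlow⟩
    have hclos : closure U ⊆ closedBall z R := closure_minimal hR isClosed_closedBall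
    have hup : ∀ a ∈ S, a ≤ R := by
      rintro a ⟨x, hx, rfl⟩
      exact mem_closedBall.mp (hclos hx.1)
    have hbddA : BddAbove S := ⟨R, hup⟩
    have hinf_pos : 0 < sInf S := lt_of_lt_of_le hε (le_csInf hSne hlow)
    set r := sInf S with hr
    have hsup_eq : sSup S = r := by
      have := hshape
      unfold Shape at this
      rw [← hS] at this
      exact (div_eq_one_iff_eq hinf_pos.ne').mp this
    -- every frontier point is at distance r
    have hfr : ∀ x ∈ frontier U, dist x z = r := by
      intro x hx
      have h1 : r ≤ dist x z := csInf_le hbdd ⟨x, hx, rfl⟩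
      have h2 : dist x z ≤ r := hsup_eq ▸ le_csSup hbddA ⟨x, hx, rfl⟩
      linarith
    refine ⟨r, hinf_pos, ?_⟩
    -- ball z r ⊆ U
    have hball : ball z r ⊆ U := by
      intro w hw
      by_contra hwU
      exact precon_no_frontier (convex_ball z r).isPreconnected
        (fun p hp hpf => absurd (hfr p hpf) (ne_of_lt (mem_ball.mp hp)))
        (mem_ball_self hinf_pos) hz hw hwU
    -- no point of U at distance > r
    have hgt : ∀ x ∈ U, ¬ r < dist x z := by
      intro x hxU hlt
      set d := dist x z with hd
      have hd_pos : 0 < d := lt_trans hinf_pos hlt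
      have hdR : d ≤ R := hR hxU
      set c : ℝ := (R + 1) / d with hc
      have hc1 : 1 ≤ c := by
        rw [hc, le_div_iff₀ hd_pos]
        linarith
      set y : ℂ := z + c • (x - z) with hy
      have hyz : y - z = c • (x - z) := by rw [hy]; module
      have hynorm : dist y z = c * d := by
        rw [dist_eq_norm, hyz, norm_smul, Real.norm_eq_abs, abs_of_nonneg (by linarith),
          ← dist_eq_norm]
      have hyU : y ∉ U := by
        intro h
        have := hR h
        rw [mem_closedBall, hynorm, hc, div_mul_cancel₀ _ hd_pos.ne'] at this
        linarith
      -- every point of the segment has distance ≥ d > r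
      have hseg : ∀ p ∈ segment ℝ x y, d ≤ dist p z := by
        rintro p ⟨a, b, ha, hb, hab, rfl⟩
        have hpz : (a • x + b • y) - z = (a + b * c) • (x - z) := by
          have hab' : a = 1 - b := by linarith
          subst hab'
          rw [hy]; module
        have habc : 1 ≤ a + b * c := by nlinarith
        rw [dist_eq_norm, hpz, norm_smul, Real.norm_eq_abs,
          abs_of_nonneg (by linarith), ← dist_eq_norm, ← hd]
        nlinarith
      exact precon_no_frontier (convex_segment x y).isPreconnected
        (fun p hp hpf => by
          have := hfr p hpf
          have := hseg p hp
          linarith)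
        (left_mem_segment ℝ x y) hxU (right_mem_segment ℝ x y) hyU
    -- U ⊆ ball z r
    have hsub : U ⊆ ball z r := by
      intro x hxU
      rw [mem_ball]
      rcases lt_or_ge (dist x z) r with h | h
      · exact h
      rcases eq_or_lt_of_le h with h | h
      · -- dist x z = r : find a point of U strictly farther
        exfalso
        obtain ⟨δ, hδ, hδball⟩ := Metric.isOpen_iff.mp hUopen x hxU
        have hxz : x ≠ z := by
          intro hxy
          rw [hxy, dist_self] at h
          exact hinf_pos.ne' h
        set s : ℝ := min (δ / 2) r with hs
        have hs_pos : 0 < s := lt_min (by linarith) hinf_pos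
        set y : ℂ := x + (s / r) • (x - z) with hy
        have hyx : dist y x = s := by
          have : y - x = (s / r) • (x - z) := by rw [hy]; module
          rw [dist_eq_norm, this, norm_smul, Real.norm_eq_abs,
            abs_of_nonneg (div_nonneg hs_pos.le hinf_pos.le), ← dist_eq_norm, ← h,
            div_mul_cancel₀ _ hinf_pos.ne']
        have hyU : y ∈ U := hδball (by
          rw [mem_ball, hyx, hs]
          exact lt_of_le_of_lt (min_le_left _ _) (by linarith))
        have hyz : dist y z = r + s := by
          have : y - z = (1 + s / r) • (x - z) := by rw [hy]; module
          rw [dist_eq_norm, this, norm_smul, Real.norm_eq_abs,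
            abs_of_nonneg (by positivity), ← dist_eq_norm, ← h]
          rw [add_mul, one_mul, div_mul_cancel₀ _ hinf_pos.ne']
        exact hgt y hyU (by rw [hyz]; linarith)
      · exact absurd h (hgt x hxU)
    exact subset_antisymm hsub hball
  · rintro ⟨r, hr, rfl⟩
    have hfr : frontier (ball z r) = sphere z r := frontier_ball z hr.ne'
    have himg : (fun x => dist x z) '' frontier (ball z r) = {r} := by
      rw [hfr]
      apply subset_antisymm
      · rintro a ⟨x, hx, rfl⟩
        exact mem_sphere.mp hx
      · rintro a ha
        rw [mem_singleton_iff] at ha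
        subst ha
        have hsp : (sphere z a).Nonempty := NormedSpace.sphere_nonempty.mpr hr.le
        obtain ⟨x, hx⟩ := hsp
        exact ⟨x, hx, mem_sphere.mp hx⟩
    unfold Shape
    rw [himg, csSup_singleton, csInf_singleton, div_self hr.ne']
end

section
/- Let K ⊆ ℂ be a compact set contained in an open annulus H, and for ε > 0 let E_ε be the closed ε-neighborhood of K (union of closed disks of radius ε/2 centered at points of K). Then K = ⋂_{ε>0} E_ε, and if K does not separate the two boundary components of H, then for some ε₀ > 0 the set E_{ε₀} does not separate them either. -/
open Set Metric

/-- `S` separates the two boundary circles of the annulus `H` if no connected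
subset of `closure H \ S` meets both circles. -/
def SeparatesInAnnulus (H γ₀ γ₁ S : Set ℂ) : Prop :=
  ¬ ∃ T : Set ℂ, IsConnected T ∧ T ⊆ closure H \ S ∧
      (T ∩ γ₀).Nonempty ∧ (T ∩ γ₁).Nonempty

/-- The closed annulus is contained in the closure of the open annulus. -/
lemma closedAnn_subset_closure (r₀ r₁ : ℝ) (h0 : 0 < r₀) (h01 : r₀ < r₁) :
    {z : ℂ | r₀ ≤ ‖z‖ ∧ ‖z‖ ≤ r₁} ⊆
      closure {z : ℂ | r₀ < ‖z‖ ∧ ‖z‖ < r₁} := by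
  intro z hz
  obtain ⟨h1, h2⟩ := hz
  have hzpos : 0 < ‖z‖ := lt_of_lt_of_le h0 h1
  set m : ℝ := (r₀ + r₁) / 2 with hm
  have hmr : r₀ < m ∧ m < r₁ := ⟨by simp [hm]; linarith, by simp [hm]; linarith⟩
  set c : ℝ := m / ‖z‖ - 1 with hc
  have hf : Filter.Tendsto (fun t : ℝ => ((1 : ℝ) + t * c) • z)
      (nhdsWithin 0 (Set.Ioi 0)) (nhds z) := by
    have hcont : Continuous (fun t : ℝ => ((1 : ℝ) + t * c) • z) := by continuity
    have h := hcont.tendsto 0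
    simp only [zero_mul, add_zero, one_smul] at h
    exact h.mono_left nhdsWithin_le_nhds
  refine mem_closure_of_tendsto hf ?_
  filter_upwards [Ioc_mem_nhdsGT_of_mem (Set.left_mem_Ico.mpr one_pos)] with t ht
  obtain ⟨ht0, ht1⟩ := ht
  have key : (1 + t * c) * ‖z‖ = (1 - t) * ‖z‖ + t * m := by
    rw [hc]; field_simp; ring
  have hlb : r₀ < (1 - t) * ‖z‖ + t * m := by nlinarith [hmr.1]
  have hub : (1 - t) * ‖z‖ + t * m < r₁ := by nlinarith [hmr.2]
  have hpos : 0 < 1 + t * c := by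
    by_contra h
    push_neg at h
    nlinarith
  have habs : ‖((1 : ℝ) + t * c) • z‖ = (1 + t * c) * ‖z‖ := by
    rw [norm_smul, Real.norm_eq_abs, abs_of_pos hpos]
  constructor
  · rw [habs, key]; exact hlb
  · rw [habs, key]; exact hub

/-- A compact subset of an annulus is the intersection of its closed
`ε`-neighborhoods, and if it does not separate the two boundary circles then
neither does some closed `ε₀`-neighborhood. -/
theorem neighborhood_separation (r₀ r₁ : ℝ) (h0 : 0 < r₀) (h01 : r₀ < r₁)
    (K : Set ℂ) (hKcpt : IsCompact K)
    (hK : K ⊆ {z : ℂ | r₀ < ‖z‖ ∧ ‖z‖ < r₁}) :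
    K = ⋂ ε ∈ {ε : ℝ | 0 < ε}, (⋃ x ∈ K, Metric.closedBall x (ε / 2)) ∧
    (¬ SeparatesInAnnulus {z : ℂ | r₀ < ‖z‖ ∧ ‖z‖ < r₁}
        (Metric.sphere (0 : ℂ) r₀) (Metric.sphere (0 : ℂ) r₁) K →
      ∃ ε₀ > (0 : ℝ),
        ¬ SeparatesInAnnulus {z : ℂ | r₀ < ‖z‖ ∧ ‖z‖ < r₁}
          (Metric.sphere (0 : ℂ) r₀) (Metric.sphere (0 : ℂ) r₁)
          (⋃ x ∈ K, Metric.closedBall x (ε₀ / 2))) := by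
  constructor
  · -- K equals the intersection of its closed neighborhoods
    apply Subset.antisymm
    · intro z hz
      simp only [mem_iInter, mem_setOf_eq]
      intro ε hε
      exact mem_biUnion hz (mem_closedBall_self (by positivity))
    · intro z hz
      simp only [mem_iInter, mem_setOf_eq] at hz
      have : z ∈ closure K := by
        rw [Metric.mem_closure_iff]
        intro ε hε
        obtain ⟨x, hxK, hx⟩ := mem_iUnion₂.mp (hz ε hε)
        exact ⟨x, hxK, lt_of_le_of_lt (mem_closedBall.mp hx) (by linarith)⟩
      rwa [hKcpt.isClosed.closure_eq] at this
  · -- the separation statement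
    intro hns
    obtain ⟨T, hTconn, hTsub, ⟨a, haT, ha⟩, ⟨b, hbT, hb⟩⟩ := not_not.mp hns
    rcases K.eq_empty_or_nonempty with hKe | hKne
    · refine ⟨1, one_pos, fun hsep => hsep ⟨T, hTconn, ?_, ⟨a, haT, ha⟩, ⟨b, hbT, hb⟩⟩⟩
      simpa [hKe] using hTsub
    -- Main case. First: closure H sits inside the closed annulus.
    have hclosH : closure {z : ℂ | r₀ < ‖z‖ ∧ ‖z‖ < r₁} ⊆
        {z : ℂ | r₀ ≤ ‖z‖ ∧ ‖z‖ ≤ r₁} := by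
      apply closure_minimal
      · exact fun z hz => ⟨le_of_lt hz.1, le_of_lt hz.2⟩
      · have : IsClosed ((fun z : ℂ => ‖z‖) ⁻¹' Set.Icc r₀ r₁) :=
          IsClosed.preimage continuous_norm isClosed_Icc
        exact this
    -- The open set Ω
    set Ω : Set ℂ := {(0 : ℂ)}ᶜ ∩ Kᶜ with hΩ
    have hΩopen : IsOpen Ω := isOpen_compl_singleton.inter hKcpt.isClosed.isOpen_compl
    have hsubΩ : closure {z : ℂ | r₀ < ‖z‖ ∧ ‖z‖ < r₁} \ K ⊆ Ω := by
      intro z hz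
      refine ⟨fun h0' => ?_, hz.2⟩
      have := (hclosH hz.1).1
      rw [Set.mem_singleton_iff.mp h0'] at this
      simp at this; linarith
    have hTΩ : T ⊆ Ω := fun z hz => hsubΩ (hTsub hz)
    -- the connected component of Ω containing a
    have haΩ : a ∈ Ω := hTΩ haT
    set C : Set ℂ := connectedComponentIn Ω a with hC
    have hTC : T ⊆ C := hTconn.isPreconnected.subset_connectedComponentIn haT hTΩ
    have hCopen : IsOpen C := hΩopen.connectedComponentIn
    have hCconn : IsConnected C := isConnected_connectedComponentIn_iff.mpr haΩ
    have hCpath : IsPathConnected C := hCopen.isConnected_iff_isPathConnected.mp hCconn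
    obtain ⟨p, hp⟩ := hCpath.joinedIn a (hTC haT) b (hTC hbT)
    -- the compact connected path image
    set P : Set ℂ := Set.range p with hP
    have hPΩ : P ⊆ Ω := by
      rintro z ⟨t, rfl⟩
      exact connectedComponentIn_subset Ω a (hp t)
    have hPne0 : ∀ z ∈ P, ‖z‖ ≠ 0 := by
      intro z hz
      have := (hPΩ hz).1
      simp only [Set.mem_compl_iff, Set.mem_singleton_iff] at this
      simpa using this
    -- the radial clamping retraction
    set ρ : ℂ → ℂ := fun z => ((max r₀ (min (‖z‖) r₁)) / ‖z‖ : ℝ) • z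
      with hρ
    have hcont : ContinuousOn ρ P := by
      apply ContinuousOn.smul (f := fun z : ℂ => ((max r₀ (min (‖z‖) r₁)) / ‖z‖ : ℝ)) (g := id)
      · exact ContinuousOn.div
          ((continuous_const.max (continuous_norm.min continuous_const)).continuousOn)
          continuous_norm.continuousOn hPne0
      · exact continuous_id.continuousOn
    have hmaxpos : ∀ z : ℂ, 0 < max r₀ (min (‖z‖) r₁) :=
      fun z => lt_of_lt_of_le h0 (le_max_left _ _)
    have habsρ : ∀ z ∈ P, ‖ρ z‖ = max r₀ (min (‖z‖) r₁) := by
      intro z hz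
      rw [hρ]
      simp only
      rw [norm_smul, Real.norm_eq_abs,
        abs_of_pos (div_pos (hmaxpos z) (lt_of_le_of_ne (norm_nonneg z)
          (Ne.symm (hPne0 z hz))))]
      rw [div_mul_eq_mul_div, mul_div_assoc, div_self (hPne0 z hz), mul_one]
    have hρ_id : ∀ z ∈ P, r₀ ≤ ‖z‖ → ‖z‖ ≤ r₁ → ρ z = z := by
      intro z hz h1 h2
      rw [hρ]
      simp only
      rw [min_eq_left h2, max_eq_right h1, div_self (hPne0 z hz), one_smul]
    have hρK : ∀ z ∈ P, ρ z ∉ K := by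
      intro z hz hmem
      by_cases h1 : r₀ ≤ ‖z‖
      · by_cases h2 : ‖z‖ ≤ r₁
        · rw [hρ_id z hz h1 h2] at hmem
          exact (hPΩ hz).2 hmem
        · push_neg at h2
          have := (hK hmem).2
          rw [habsρ z hz, min_eq_right h2.le, max_eq_right h01.le] at this
          exact lt_irrefl _ this
      · push_neg at h1
        have := (hK hmem).1
        rw [habsρ z hz, min_eq_left (by linarith : ‖z‖ ≤ r₁),
          max_eq_left h1.le] at this
        exact lt_irrefl _ this
    have hρH : ∀ z ∈ P, ρ z ∈
        closure {z : ℂ | r₀ < ‖z‖ ∧ ‖z‖ < r₁} := by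
      intro z hz
      apply closedAnn_subset_closure r₀ r₁ h0 h01
      rw [Set.mem_setOf_eq, habsρ z hz]
      exact ⟨le_max_left _ _, max_le h01.le (min_le_right _ _)⟩
    -- the new connected compact set
    set T' : Set ℂ := ρ '' P with hT'
    have hPcpt : IsCompact P := isCompact_range p.continuous
    have hPconn : IsConnected P := isConnected_range p.continuous
    have hT'cpt : IsCompact T' := hPcpt.image_of_continuousOn hcont
    have hT'conn : IsConnected T' := hPconn.image ρ hcont
    have haP : a ∈ P := ⟨0, p.source⟩
    have hbP : b ∈ P := ⟨1, p.target⟩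
    have haabs : ‖a‖ = r₀ := by
      have := mem_sphere_zero_iff_norm.mp ha
      exact this
    have hbabs : ‖b‖ = r₁ := by
      have := mem_sphere_zero_iff_norm.mp hb
      exact this
    have hρa : ρ a = a := hρ_id a haP (le_of_eq haabs.symm) (by rw [haabs]; exact h01.le)
    have hρb : ρ b = b := hρ_id b hbP (by rw [hbabs]; exact h01.le) (le_of_eq hbabs)
    have haT' : a ∈ T' := hρa ▸ mem_image_of_mem ρ haP
    have hbT' : b ∈ T' := hρb ▸ mem_image_of_mem ρ hbP
    -- positive distance between T' and K
    obtain ⟨y₀, hy₀T', hy₀min⟩ := hT'cpt.exists_isMinOn ⟨a, haT'⟩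
      ((continuous_infDist_pt K).continuousOn)
    have hy₀K : y₀ ∉ K := by
      obtain ⟨z, hz, rfl⟩ := hy₀T'
      exact hρK z hz
    set ε₀ : ℝ := infDist y₀ K with hε₀
    have hε₀pos : 0 < ε₀ := (hKcpt.isClosed.notMem_iff_infDist_pos hKne).mp hy₀K
    have hdistT' : ∀ y ∈ T', ∀ x ∈ K, ε₀ ≤ dist y x := by
      intro y hy x hx
      calc ε₀ ≤ infDist y K := hy₀min hy
        _ ≤ dist y x := infDist_le_dist_of_mem hx
    refine ⟨ε₀, hε₀pos, fun hsep => hsep ⟨T', hT'conn, ?_, ⟨a, haT', ha⟩, ⟨b, hbT', hb⟩⟩⟩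
    rintro y ⟨z, hz, rfl⟩
    refine ⟨hρH z hz, fun hmem => ?_⟩
    obtain ⟨x, hxK, hx⟩ := mem_iUnion₂.mp hmem
    have h1 := hdistT' (ρ z) (mem_image_of_mem ρ hz) x hxK
    have h2 := mem_closedBall.mp hx
    linarith
end

section
/- Let f : ℂ → ℂ be a polynomial and (Ωᵢ) a sequence of distinct connected components of the Fatou set of f whose closures converge in the Hausdorff metric to a compact set K. Then K is contained in the Julia set J_f. -/
open Set Filter Metric Bornology Polynomial

private lemma aux_growth (p : Polynomial ℂ) (hd : 2 ≤ p.natDegree) :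
    ∃ R : ℝ, 0 < R ∧ ∀ z : ℂ, R ≤ ‖z‖ → 2 * ‖z‖ ≤ ‖p.eval z‖ := by
  have hq : 0 < p.divX.degree := by
    rw [← natDegree_pos_iff_degree_pos, natDegree_divX_eq_natDegree_tsub_one]
    omega
  have h3 : Tendsto (fun z : ℂ => ‖p.divX.eval z‖) (cobounded ℂ) atTop :=
    p.divX.tendsto_norm_atTop hq tendsto_norm_cobounded_atTop
  have hev : ∀ᶠ z : ℂ in cobounded ℂ, 3 ≤ ‖p.divX.eval z‖ := h3.eventually_ge_atTop 3
  rw [← comap_norm_atTop, eventually_comap, eventually_atTop] at hev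
  obtain ⟨R₀, hR₀⟩ := hev
  refine ⟨max R₀ (max 1 ‖p.coeff 0‖), lt_of_lt_of_le one_pos
    (le_trans (le_max_left _ _) (le_max_right _ _)), ?_⟩
  intro z hz
  have h1 : 3 ≤ ‖p.divX.eval z‖ := hR₀ ‖z‖ (le_trans (le_max_left _ _) hz) z rfl
  have h2 : ‖p.coeff 0‖ ≤ ‖z‖ := le_trans (le_trans (le_max_right _ _) (le_max_right _ _)) hz
  have key : p.divX.eval z * z + p.coeff 0 = p.eval z := by
    conv_rhs => rw [← divX_mul_X_add p]
    simp
  have htri : ‖p.divX.eval z * z‖ - ‖p.coeff 0‖ ≤ ‖p.divX.eval z * z + p.coeff 0‖ := by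
    have := norm_add_le (p.divX.eval z * z + p.coeff 0) (-(p.coeff 0))
    simp only [add_neg_cancel_right, norm_neg] at this
    linarith
  have hz0 : (0:ℝ) ≤ ‖z‖ := norm_nonneg z
  calc 2 * ‖z‖ = 3 * ‖z‖ - ‖z‖ := by ring
    _ ≤ ‖p.divX.eval z‖ * ‖z‖ - ‖p.coeff 0‖ := by nlinarith
    _ = ‖p.divX.eval z * z‖ - ‖p.coeff 0‖ := by rw [norm_mul]
    _ ≤ ‖p.divX.eval z * z + p.coeff 0‖ := htri
    _ = ‖p.eval z‖ := by rw [key]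

private lemma aux_iter (p : Polynomial ℂ) {R : ℝ}
    (hg : ∀ z : ℂ, R ≤ ‖z‖ → 2 * ‖z‖ ≤ ‖p.eval z‖) :
    ∀ (z : ℂ), R ≤ ‖z‖ → ∀ n : ℕ, 2 ^ n * ‖z‖ ≤ ‖(fun w => p.eval w)^[n] z‖ := by
  intro z hz n
  induction n with
  | zero => simp
  | succ n ih =>
    have h1 : (1:ℝ) ≤ 2 ^ n := one_le_pow₀ one_le_two
    have h2 : R ≤ ‖(fun w => p.eval w)^[n] z‖ := by nlinarith [norm_nonneg z, hz, ih, h1]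
    have h3 := hg _ h2
    rw [Function.iterate_succ_apply']
    calc 2 ^ (n+1) * ‖z‖ = 2 * (2 ^ n * ‖z‖) := by ring
      _ ≤ 2 * ‖(fun w => p.eval w)^[n] z‖ := by linarith
      _ ≤ ‖p.eval ((fun w => p.eval w)^[n] z)‖ := h3

private lemma aux_compl_eq (p : Polynomial ℂ) {R : ℝ} (hR : 0 < R)
    (hg : ∀ z : ℂ, R ≤ ‖z‖ → 2 * ‖z‖ ≤ ‖p.eval z‖) :
    {z : ℂ | Bornology.IsBounded (Set.range fun n => (fun w => p.eval w)^[n] z)}ᶜ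
      = ⋃ n : ℕ, {z : ℂ | R < ‖(fun w => p.eval w)^[n] z‖} := by
  ext z
  simp only [mem_compl_iff, mem_setOf_eq, mem_iUnion]
  constructor
  · intro h
    by_contra hc
    push_neg at hc
    exact h (isBounded_iff_forall_norm_le.2 ⟨R, by rintro _ ⟨n, rfl⟩; exact hc n⟩)
  · rintro ⟨n, hn⟩ hb
    obtain ⟨C, hC⟩ := isBounded_iff_forall_norm_le.1 hb
    obtain ⟨m, hm⟩ := pow_unbounded_of_one_lt (C / ‖(fun w => p.eval w)^[n] z‖) one_lt_two
    have hpos : 0 < ‖(fun w => p.eval w)^[n] z‖ := lt_trans hR hn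
    have h1 : C < 2 ^ m * ‖(fun w => p.eval w)^[n] z‖ := by
      rw [div_lt_iff₀ hpos] at hm; linarith
    have h2 := aux_iter p hg _ (le_of_lt hn) m
    rw [← Function.iterate_add_apply] at h2
    have h3 : ‖(fun w => p.eval w)^[m + n] z‖ ≤ C := hC _ ⟨m + n, rfl⟩
    linarith

private lemma aux_V (R : ℝ) (hR : 0 < R) : IsPreconnected {z : ℂ | R < ‖z‖} := by
  have h1 : IsConnected ({0}ᶜ : Set ℂ) :=
    isConnected_compl_singleton_of_one_lt_rank
      (by rw [Complex.rank_real_complex]; norm_num) 0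
  have himg : {z : ℂ | R < ‖z‖} = (fun z : ℂ => ((R + ‖z‖) / ‖z‖) • z) '' ({0}ᶜ) := by
    ext w
    simp only [mem_setOf_eq, mem_image, mem_compl_iff, mem_singleton_iff]
    constructor
    · intro hw
      have hw0 : 0 < ‖w‖ := lt_trans hR hw
      refine ⟨((‖w‖ - R) / ‖w‖) • w, ?_, ?_⟩
      · intro h0
        rcases smul_eq_zero.1 h0 with hc | hw'
        · exact absurd hc (ne_of_gt (div_pos (by linarith) hw0))
        · exact absurd hw' (norm_pos_iff.1 hw0)
      · have hnz : ‖((‖w‖ - R) / ‖w‖) • w‖ = ‖w‖ - R := by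
          rw [norm_smul, Real.norm_eq_abs, abs_of_pos (div_pos (by linarith) hw0),
            div_mul_cancel₀ _ (ne_of_gt hw0)]
        rw [hnz, smul_smul]
        have hne1 : ‖w‖ ≠ 0 := ne_of_gt hw0
        have hne2 : ‖w‖ - R ≠ 0 := ne_of_gt (by linarith)
        have hcoef : (R + (‖w‖ - R)) / (‖w‖ - R) * ((‖w‖ - R) / ‖w‖) = 1 := by
          have hx : R + (‖w‖ - R) = ‖w‖ := by ring
          rw [hx, div_mul_div_comm, mul_comm (‖w‖) (‖w‖ - R),
            div_self (mul_ne_zero hne2 hne1)]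
        rw [hcoef, one_smul]
    · rintro ⟨z, hz, rfl⟩
      have hz0 : 0 < ‖z‖ := norm_pos_iff.2 hz
      rw [norm_smul, Real.norm_eq_abs,
        abs_of_pos (div_pos (by linarith [norm_nonneg z]) hz0),
        div_mul_cancel₀ _ (ne_of_gt hz0)]
      linarith [norm_nonneg z]
  rw [himg]
  apply IsPreconnected.image h1.isPreconnected
  apply ContinuousOn.fun_smul
  · apply ContinuousOn.div
    · exact (continuous_const.add continuous_norm).continuousOn
    · exact continuous_norm.continuousOn
    · intro z hz
      exact norm_ne_zero_iff.2 hz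
  · exact continuousOn_id

private lemma aux_Wn (p : Polynomial ℂ) {R : ℝ} (hR : 0 < R)
    (hg : ∀ z : ℂ, R ≤ ‖z‖ → 2 * ‖z‖ ≤ ‖p.eval z‖) (n : ℕ) :
    IsPreconnected {z : ℂ | R < ‖(fun w => p.eval w)^[n] z‖} := by
  set g : ℂ → ℂ := (fun w => p.eval w)^[n] with hgdef
  have hgc : Continuous g := (p.continuous).iterate n
  set W : Set ℂ := {z : ℂ | R < ‖g z‖} with hWdef
  have hW : IsOpen W := isOpen_lt continuous_const hgc.norm
  have hVW : {z : ℂ | R < ‖z‖} ⊆ W := by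
    intro z hz
    have hz' : R < ‖z‖ := hz
    have h1 := aux_iter p hg z (le_of_lt hz') n
    have h2 : (1:ℝ) ≤ 2 ^ n := one_le_pow₀ one_le_two
    have : R < ‖(fun w => p.eval w)^[n] z‖ := by nlinarith [norm_nonneg z, hz']
    exact this
  set z₀ : ℂ := ((R + 1 : ℝ) : ℂ) with hz₀def
  have hz₀V : z₀ ∈ {z : ℂ | R < ‖z‖} := by
    simp only [mem_setOf_eq, hz₀def, Complex.norm_real, Real.norm_eq_abs,
      abs_of_pos (by linarith : (0:ℝ) < R + 1)]
    linarith
  have hz₀W : z₀ ∈ W := hVW hz₀V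
  have hkey : ∀ w ∈ W, w ∈ connectedComponentIn W z₀ := by
    intro w hw
    set C : Set ℂ := connectedComponentIn W w with hCdef
    have hwC : w ∈ C := mem_connectedComponentIn hw
    have hCopen : IsOpen C := hW.connectedComponentIn
    have hCV : ∃ v ∈ C, R < ‖v‖ := by
      by_contra hcon
      push_neg at hcon
      have hCb : IsBounded C := isBounded_iff_forall_norm_le.2 ⟨R, hcon⟩
      have hfront : ∀ ζ ∈ frontier C, ‖g ζ‖ ≤ R := by
        intro ζ hζ
        by_contra hgt
        push_neg at hgt
        have hζW : ζ ∈ W := hgt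
        have hζnC : ζ ∉ C := by
          intro h
          exact hζ.2 (by rwa [hCopen.interior_eq])
        have hD : IsOpen (connectedComponentIn W ζ) := hW.connectedComponentIn
        have hζD : ζ ∈ connectedComponentIn W ζ := mem_connectedComponentIn hζW
        obtain ⟨u, huD, huC⟩ := mem_closure_iff.1 hζ.1 _ hD hζD
        have h1 : connectedComponentIn W ζ = connectedComponentIn W u :=
          connectedComponentIn_eq huD
        have h2 : C = connectedComponentIn W u := connectedComponentIn_eq huC
        exact hζnC (h2 ▸ h1 ▸ hζD)
      have hdiff : Differentiable ℂ g := (p.differentiable).iterate n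
      have := Complex.norm_le_of_forall_mem_frontier_norm_le hCb hdiff.diffContOnCl
        hfront (subset_closure hwC)
      exact absurd hw (not_lt.2 this)
    obtain ⟨v, hvC, hvV⟩ := hCV
    have hCeq : C = connectedComponentIn W v := connectedComponentIn_eq hvC
    have hVC : {z : ℂ | R < ‖z‖} ⊆ C := by
      rw [hCeq]
      exact (aux_V R hR).subset_connectedComponentIn hvV hVW
    have hz₀C : z₀ ∈ C := hVC hz₀V
    have : C = connectedComponentIn W z₀ := connectedComponentIn_eq hz₀C
    exact this ▸ hwC
  have hWeq : W = connectedComponentIn W z₀ :=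
    Subset.antisymm hkey (connectedComponentIn_subset W z₀)
  show IsPreconnected W
  rw [hWeq]
  exact isPreconnected_connectedComponentIn

/-- The Hausdorff limit of the closures of a sequence of distinct Fatou
components of a polynomial is contained in the Julia set.  For a polynomial,
the Julia set is the boundary of the filled Julia set, and the Fatou set is its
complement. -/
theorem hausdorff_limit_of_fatou_components_in_julia (p : Polynomial ℂ)
    (hd : 2 ≤ p.natDegree)
    (J : Set ℂ)
    (hJ : J = frontier {z : ℂ | Bornology.IsBounded (Set.range fun n => (fun w => p.eval w)^[n] z)})
    (Ω : ℕ → Set ℂ)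
    (hΩ : ∀ i, ∃ z ∈ Jᶜ, Ω i = connectedComponentIn Jᶜ z)
    (hdistinct : ∀ i j, i ≠ j → Ω i ≠ Ω j)
    (K : Set ℂ) (hKcpt : IsCompact K)
    (hconv : Tendsto (fun i => Metric.hausdorffDist (closure (Ω i)) K) atTop (nhds 0)) :
    K ⊆ J := by
  obtain ⟨R, hR, hg⟩ := aux_growth p hd
  set L : Set ℂ :=
    {z : ℂ | Bornology.IsBounded (Set.range fun n => (fun w => p.eval w)^[n] z)} with hLdef
  have hLc_eq : Lᶜ = ⋃ n : ℕ, {z : ℂ | R < ‖(fun w => p.eval w)^[n] z‖} :=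
    aux_compl_eq p hR hg
  have hLc_open : IsOpen Lᶜ := by
    rw [hLc_eq]
    exact isOpen_iUnion fun n => isOpen_lt continuous_const ((p.continuous.iterate n).norm)
  have hLclosed : IsClosed L := isOpen_compl_iff.1 hLc_open
  have hJL : J ⊆ L := by
    rw [hJ]
    exact hLclosed.frontier_subset
  have hLcJc : Lᶜ ⊆ Jᶜ := compl_subset_compl.2 hJL
  have hVLc : {z : ℂ | R < ‖z‖} ⊆ Lᶜ := by
    rw [hLc_eq]
    intro z hz
    exact mem_iUnion.2 ⟨0, by simpa using hz⟩
  set z₀ : ℂ := ((R + 1 : ℝ) : ℂ) with hz₀def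
  have hz₀V : z₀ ∈ {z : ℂ | R < ‖z‖} := by
    simp only [mem_setOf_eq, hz₀def, Complex.norm_real, Real.norm_eq_abs,
      abs_of_pos (by linarith : (0:ℝ) < R + 1)]
    linarith
  have hLc_pre : IsPreconnected Lᶜ := by
    rw [hLc_eq]
    exact isPreconnected_iUnion
      ⟨z₀, mem_iInter.2 fun n => by
        have hz₀V' : R < ‖z₀‖ := hz₀V
        have h1 := aux_iter p hg z₀ (le_of_lt hz₀V') n
        have h2 : (1:ℝ) ≤ 2 ^ n := one_le_pow₀ one_le_two
        have : R < ‖(fun w => p.eval w)^[n] z₀‖ := by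
          nlinarith [norm_nonneg z₀, hz₀V']
        exact this⟩
      (fun n => aux_Wn p hR hg n)
  -- at most one unbounded component
  have huniq : ∀ i j, ¬ IsBounded (Ω i) → ¬ IsBounded (Ω j) → Ω i = Ω j := by
    have hsub : ∀ i, ¬ IsBounded (Ω i) → Lᶜ ⊆ Ω i ∧ z₀ ∈ Ω i := by
      intro i hi
      obtain ⟨z, hz, hΩz⟩ := hΩ i
      have hv : ∃ v ∈ Ω i, R < ‖v‖ := by
        by_contra hcon
        push_neg at hcon
        exact hi (isBounded_iff_forall_norm_le.2 ⟨R, hcon⟩)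
      obtain ⟨v, hvΩ, hvV⟩ := hv
      have hΩv : Ω i = connectedComponentIn Jᶜ v :=
        hΩz.trans (connectedComponentIn_eq (hΩz ▸ hvΩ))
      have hvLc : v ∈ Lᶜ := hVLc hvV
      have hsub1 : Lᶜ ⊆ Ω i := by
        rw [hΩv]
        exact hLc_pre.subset_connectedComponentIn hvLc hLcJc
      exact ⟨hsub1, hsub1 (hVLc hz₀V)⟩
    intro i j hi hj
    obtain ⟨zi, hziJ, hΩi⟩ := hΩ i
    obtain ⟨zj, hzjJ, hΩj⟩ := hΩ j
    have h1 := (hsub i hi).2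
    have h2 := (hsub j hj).2
    have h1' : z₀ ∈ connectedComponentIn Jᶜ zi := hΩi ▸ h1
    have h2' : z₀ ∈ connectedComponentIn Jᶜ zj := hΩj ▸ h2
    rw [hΩi, connectedComponentIn_eq h1', hΩj, connectedComponentIn_eq h2']
  -- main argument
  intro x hxK
  by_contra hxJ
  have hxJc : x ∈ Jᶜ := hxJ
  have hJc_open : IsOpen Jᶜ := by
    rw [hJ]
    exact isClosed_frontier.isOpen_compl
  obtain ⟨r, hr, hball⟩ := Metric.isOpen_iff.1 hJc_open x hxJc
  have hev := hconv.eventually_lt_const hr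
  rw [eventually_atTop] at hev
  obtain ⟨N, hN⟩ := hev
  have hmem : ∀ a, N ≤ a → IsBounded (Ω a) → x ∈ Ω a := by
    intro a ha hab
    obtain ⟨z, hz, hΩa⟩ := hΩ a
    have hne : (closure (Ω a)).Nonempty :=
      ⟨z, subset_closure (hΩa ▸ mem_connectedComponentIn hz)⟩
    have hfin : EMetric.hausdorffEdist (closure (Ω a)) K ≠ ⊤ :=
      hausdorffEdist_ne_top_of_nonempty_of_bounded hne ⟨x, hxK⟩ hab.closure hKcpt.isBounded
    obtain ⟨y, hy, hyx⟩ := exists_dist_lt_of_hausdorffDist_lt' hxK (hN a ha) hfin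
    have hyball : y ∈ ball x r := mem_ball.2 hyx
    obtain ⟨w, hwb, hwΩ⟩ := mem_closure_iff.1 hy (ball x r) isOpen_ball hyball
    have hΩw : Ω a = connectedComponentIn Jᶜ w :=
      hΩa.trans (connectedComponentIn_eq (hΩa ▸ hwΩ))
    have hsub : ball x r ⊆ Ω a := by
      rw [hΩw]
      exact (convex_ball x r).isPreconnected.subset_connectedComponentIn hwb hball
    exact hsub (mem_ball_self hr)
  have hpick : ∃ a b, N ≤ a ∧ N ≤ b ∧ a ≠ b ∧ IsBounded (Ω a) ∧ IsBounded (Ω b) := by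
    by_cases h0 : IsBounded (Ω N)
    · by_cases h1 : IsBounded (Ω (N+1))
      · exact ⟨N, N+1, le_refl _, by omega, by omega, h0, h1⟩
      · have h2 : IsBounded (Ω (N+2)) := by
          by_contra h2
          exact hdistinct (N+1) (N+2) (by omega) (huniq _ _ h1 h2)
        exact ⟨N, N+2, le_refl _, by omega, by omega, h0, h2⟩
    · have h1 : IsBounded (Ω (N+1)) := by
        by_contra h1
        exact hdistinct N (N+1) (by omega) (huniq _ _ h0 h1)
      have h2 : IsBounded (Ω (N+2)) := by
        by_contra h2
        exact hdistinct N (N+2) (by omega) (huniq _ _ h0 h2)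
      exact ⟨N+1, N+2, by omega, by omega, by omega, h1, h2⟩
  obtain ⟨a, b, haN, hbN, hab, hba, hbb⟩ := hpick
  have hxa := hmem a haN hba
  have hxb := hmem b hbN hbb
  obtain ⟨za, hza, hΩa⟩ := hΩ a
  obtain ⟨zb, hzb, hΩb⟩ := hΩ b
  refine hdistinct a b hab ?_
  have hxa' : x ∈ connectedComponentIn Jᶜ za := hΩa ▸ hxa
  have hxb' : x ∈ connectedComponentIn Jᶜ zb := hΩb ▸ hxb
  rw [hΩa, connectedComponentIn_eq hxa', hΩb, connectedComponentIn_eq hxb']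
end
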